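/- arXiv:1302.5871 — 3 statements merged into one kernel-verified Lean document; each statement's English description precedes it below -/
import Mathlib

section
/- Approximate optimality from approximate complementary slackness: let f be a feasible flow and (α, β) a feasible dual for the budgeted transportation LP with 0 ≤ ε. Suppose (i) for every edge ij with f_{ij} > 0 we have α_i ≤ c_{ij} − p_{ij} β_j + ε c_{ij}, (ii) for every source i with ∑_j f_{ij} < a_i we have α_i = 0, and (iii) for every sink j with ∑_i p_{ij} f_{ij} < b_j we have β_j = 0. Then ∑_{ij} c_{ij} f_{ij} ≥ (1 − ε)·OPT, where OPT is the value of any feasible flow g (i.e. ∑_{ij} c_{ij} f_{ij} ≥ (1−ε) ∑_{ij} c_{ij} g_{ij}). -/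
/-- Approximate optimality from approximate complementary slackness
for the budgeted transportation LP. -/
theorem budgeted_transportation_approx_optimality
    {S T : Type*} [Fintype S] [Fintype T]
    (a : S → ℝ) (b : T → ℝ) (p c f g : S → T → ℝ) (α : S → ℝ) (β : T → ℝ) (ε : ℝ)
    (hε : 0 ≤ ε)
    (ha : ∀ i, 0 ≤ a i) (hb : ∀ j, 0 ≤ b j)
    (hp : ∀ i j, 0 < p i j) (hc : ∀ i j, 0 ≤ c i j)
    -- f is a feasible flow
    (hf : ∀ i j, 0 ≤ f i j)
    (hcap : ∀ i, ∑ j, f i j ≤ a i)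
    (hbud : ∀ j, ∑ i, p i j * f i j ≤ b j)
    -- (α, β) is a feasible dual
    (hα : ∀ i, 0 ≤ α i) (hβ : ∀ j, 0 ≤ β j)
    (hdual : ∀ i j, c i j - p i j * β j ≤ α i)
    -- approximate complementary slackness
    (hcs1 : ∀ i j, 0 < f i j → α i ≤ c i j - p i j * β j + ε * c i j)
    (hcs2 : ∀ i, ∑ j, f i j < a i → α i = 0)
    (hcs3 : ∀ j, ∑ i, p i j * f i j < b j → β j = 0)
    -- g is any feasible flow
    (hg : ∀ i j, 0 ≤ g i j)
    (hgcap : ∀ i, ∑ j, g i j ≤ a i)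
    (hgbud : ∀ j, ∑ i, p i j * g i j ≤ b j) :
    ∑ i, ∑ j, c i j * f i j ≥ (1 - ε) * ∑ i, ∑ j, c i j * g i j := by
  set F := ∑ i, ∑ j, c i j * f i j with hF
  set G := ∑ i, ∑ j, c i j * g i j with hG
  have hF0 : 0 ≤ F :=
    Finset.sum_nonneg fun i _ => Finset.sum_nonneg fun j _ =>
      mul_nonneg (hc i j) (hf i j)
  have hG0 : 0 ≤ G :=
    Finset.sum_nonneg fun i _ => Finset.sum_nonneg fun j _ =>
      mul_nonneg (hc i j) (hg i j)
  -- weak duality: G ≤ ∑ α a + ∑ β b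
  have step1 : G ≤ (∑ i, α i * a i) + ∑ j, β j * b j := by
    have h1 : G ≤ ∑ i, ∑ j, (α i * g i j + β j * (p i j * g i j)) := by
      apply Finset.sum_le_sum; intro i _
      apply Finset.sum_le_sum; intro j _
      have := hdual i j
      nlinarith [hg i j, hβ j, hp i j]
    calc G ≤ ∑ i, ∑ j, (α i * g i j + β j * (p i j * g i j)) := h1
      _ = (∑ i, α i * ∑ j, g i j) + ∑ j, β j * ∑ i, p i j * g i j := by
          simp only [Finset.sum_add_distrib, Finset.mul_sum]
          congr 1
          rw [Finset.sum_comm]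
      _ ≤ (∑ i, α i * a i) + ∑ j, β j * b j := by
          apply add_le_add
          · exact Finset.sum_le_sum fun i _ => mul_le_mul_of_nonneg_left (hgcap i) (hα i)
          · exact Finset.sum_le_sum fun j _ => mul_le_mul_of_nonneg_left (hgbud j) (hβ j)
  -- complementary slackness: ∑ α a + ∑ β b ≤ (1+ε) F
  have step2 : (∑ i, α i * a i) + ∑ j, β j * b j ≤ (1 + ε) * F := by
    have e1 : ∀ i, α i * a i = α i * ∑ j, f i j := by
      intro i
      rcases lt_or_eq_of_le (hcap i) with h | h
      · simp [hcs2 i h]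
      · rw [h]
    have e2 : ∀ j, β j * b j = β j * ∑ i, p i j * f i j := by
      intro j
      rcases lt_or_eq_of_le (hbud j) with h | h
      · simp [hcs3 j h]
      · rw [h]
    have key : (∑ i, α i * a i) + ∑ j, β j * b j
        = ∑ i, ∑ j, (α i * f i j + β j * (p i j * f i j)) := by
      simp only [e1, e2]
      simp only [Finset.sum_add_distrib, Finset.mul_sum]
      congr 1
      rw [Finset.sum_comm]
    rw [key, hF, Finset.mul_sum]
    apply Finset.sum_le_sum; intro i _
    rw [Finset.mul_sum]
    apply Finset.sum_le_sum; intro j _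
    rcases lt_or_eq_of_le (hf i j) with hpos | hzero
    · have := hcs1 i j hpos
      nlinarith [hβ j, hp i j, hf i j]
    · rw [← hzero]; ring_nf; simp
  have hGF : G ≤ (1 + ε) * F := le_trans step1 step2
  rcases le_or_gt ε 1 with h1 | h1
  · nlinarith [mul_le_mul_of_nonneg_left hGF (by linarith : (0:ℝ) ≤ 1 - ε),
      mul_nonneg (mul_nonneg hε hε) hF0]
  · nlinarith [hG0, hF0]
end

section
/- If for all edges ij with f_{ij} > 0 we have α_i ≤ c_{ij} − p_{ij} β_j + ε c_{ij}, and dual feasibility α_i ≥ c_{ij} − p_{ij} β_j holds with f ≥ 0 and c ≥ 0, then |∑_{ij} f_{ij}(c_{ij} − α_i − p_{ij} β_j)| ≤ ε ∑_{ij} c_{ij} f_{ij}. -/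
/-- Bound on the complementary-slackness defect term. -/
theorem budgeted_transportation_cs_defect_bound
    {S T : Type*} [Fintype S] [Fintype T]
    (p c f : S → T → ℝ) (α : S → ℝ) (β : T → ℝ) (ε : ℝ)
    (hε : 0 ≤ ε)
    (hf : ∀ i j, 0 ≤ f i j) (hc : ∀ i j, 0 ≤ c i j)
    (hdual : ∀ i j, c i j - p i j * β j ≤ α i)
    (hcs : ∀ i j, 0 < f i j → α i ≤ c i j - p i j * β j + ε * c i j) :
    |∑ i, ∑ j, f i j * (c i j - α i - p i j * β j)| ≤ ε * ∑ i, ∑ j, c i j * f i j := by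
  rw [Finset.mul_sum]
  simp_rw [Finset.mul_sum]
  rw [abs_le]
  constructor
  · rw [← Finset.sum_neg_distrib]
    apply Finset.sum_le_sum
    intro i _
    rw [← Finset.sum_neg_distrib]
    apply Finset.sum_le_sum
    intro j _
    rcases lt_or_eq_of_le (hf i j) with hpos | heq
    · have h := hcs i j hpos
      nlinarith [hc i j]
    · rw [← heq]; ring_nf; positivity
  · refine le_trans (b := (0:ℝ)) ?_ (Finset.sum_nonneg fun i _ =>
      Finset.sum_nonneg fun j _ => mul_nonneg hε (mul_nonneg (hc i j) (hf i j)))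
    apply Finset.sum_nonpos
    intro i _
    apply Finset.sum_nonpos
    intro j _
    have := hdual i j
    nlinarith [hf i j]
end

section
/- Approximate optimality for the capacitated problem: let f be feasible and (α, β, γ) dual-feasible for the capacitated budgeted transshipment LP, ε ≥ 0. If (i) f_{ij} > 0 implies |c_{ij} − α_i − p_{ij}β_j − γ_{ij}| ≤ ε c_{ij}, (ii) α_i > 0 implies ∑_j f_{ij} = a_i, (iii) β_j > 0 implies ∑_i p_{ij} f_{ij} = b_j, (iv) γ_{ij} > 0 implies f_{ij} = u_{ij}, then for any feasible flow g, ∑_{ij} c_{ij} f_{ij} ≥ (1 − ε) ∑_{ij} c_{ij} g_{ij}. -/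
/-- Approximate optimality for the capacitated budgeted transshipment LP. -/
theorem budgeted_transshipment_approx_optimality
    {S T : Type*} [Fintype S] [Fintype T]
    (a : S → ℝ) (b : T → ℝ) (u p c f g γ : S → T → ℝ) (α : S → ℝ) (β : T → ℝ) (ε : ℝ)
    (hε : 0 ≤ ε)
    (ha : ∀ i, 0 ≤ a i) (hb : ∀ j, 0 ≤ b j) (hu : ∀ i j, 0 ≤ u i j)
    (hp : ∀ i j, 0 < p i j) (hc : ∀ i j, 0 ≤ c i j)
    -- f is feasible
    (hf : ∀ i j, 0 ≤ f i j)
    (hcap : ∀ i, ∑ j, f i j ≤ a i)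
    (hbud : ∀ j, ∑ i, p i j * f i j ≤ b j)
    (hedge : ∀ i j, f i j ≤ u i j)
    -- (α, β, γ) is dual-feasible
    (hα : ∀ i, 0 ≤ α i) (hβ : ∀ j, 0 ≤ β j) (hγ : ∀ i j, 0 ≤ γ i j)
    (hdual : ∀ i j, c i j - p i j * β j - γ i j ≤ α i)
    -- approximate complementary slackness
    (hcs1 : ∀ i j, 0 < f i j → |c i j - α i - p i j * β j - γ i j| ≤ ε * c i j)
    (hcs2 : ∀ i, 0 < α i → ∑ j, f i j = a i)
    (hcs3 : ∀ j, 0 < β j → ∑ i, p i j * f i j = b j)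
    (hcs4 : ∀ i j, 0 < γ i j → f i j = u i j)
    -- g is any feasible flow
    (hg : ∀ i j, 0 ≤ g i j)
    (hgcap : ∀ i, ∑ j, g i j ≤ a i)
    (hgbud : ∀ j, ∑ i, p i j * g i j ≤ b j)
    (hgedge : ∀ i j, g i j ≤ u i j) :
    ∑ i, ∑ j, c i j * f i j ≥ (1 - ε) * ∑ i, ∑ j, c i j * g i j := by
  set D : ℝ := (∑ i, α i * a i) + (∑ j, β j * b j) + (∑ i, ∑ j, γ i j * u i j) with hD
  have hcf0 : (0:ℝ) ≤ ∑ i, ∑ j, c i j * f i j := by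
    apply Finset.sum_nonneg; intro i _; apply Finset.sum_nonneg; intro j _
    exact mul_nonneg (hc i j) (hf i j)
  have hcg0 : (0:ℝ) ≤ ∑ i, ∑ j, c i j * g i j := by
    apply Finset.sum_nonneg; intro i _; apply Finset.sum_nonneg; intro j _
    exact mul_nonneg (hc i j) (hg i j)
  have expand : ∀ h : S → T → ℝ,
      ∑ i, ∑ j, (α i + p i j * β j + γ i j) * h i j
        = (∑ i, α i * ∑ j, h i j) + (∑ j, β j * ∑ i, p i j * h i j)
          + (∑ i, ∑ j, γ i j * h i j) := by
    intro h
    have swap : ∑ i, ∑ j, p i j * β j * h i j = ∑ j, β j * ∑ i, p i j * h i j := by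
      rw [Finset.sum_comm]
      apply Finset.sum_congr rfl; intro j _
      rw [Finset.mul_sum]
      apply Finset.sum_congr rfl; intro i _; ring
    simp only [add_mul, Finset.sum_add_distrib]
    rw [swap]
    congr 1
    congr 1
    apply Finset.sum_congr rfl; intro i _; rw [Finset.mul_sum]
  -- weak duality: ∑ c g ≤ D
  have weak : ∑ i, ∑ j, c i j * g i j ≤ D := by
    have h1 : ∑ i, ∑ j, c i j * g i j ≤
        ∑ i, ∑ j, (α i + p i j * β j + γ i j) * g i j := by
      apply Finset.sum_le_sum; intro i _; apply Finset.sum_le_sum; intro j _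
      exact mul_le_mul_of_nonneg_right (by linarith [hdual i j]) (hg i j)
    have t1 : ∑ i, α i * ∑ j, g i j ≤ ∑ i, α i * a i :=
      Finset.sum_le_sum fun i _ => mul_le_mul_of_nonneg_left (hgcap i) (hα i)
    have t2 : ∑ j, β j * ∑ i, p i j * g i j ≤ ∑ j, β j * b j :=
      Finset.sum_le_sum fun j _ => mul_le_mul_of_nonneg_left (hgbud j) (hβ j)
    have t3 : ∑ i, ∑ j, γ i j * g i j ≤ ∑ i, ∑ j, γ i j * u i j :=
      Finset.sum_le_sum fun i _ => Finset.sum_le_sum fun j _ =>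
        mul_le_mul_of_nonneg_left (hgedge i j) (hγ i j)
    calc ∑ i, ∑ j, c i j * g i j
        ≤ (∑ i, α i * ∑ j, g i j) + (∑ j, β j * ∑ i, p i j * g i j)
          + (∑ i, ∑ j, γ i j * g i j) := h1.trans_eq (expand g)
      _ ≤ D := by rw [hD]; linarith
  -- D ≤ (1+ε) ∑ c f
  have strong : D ≤ (1 + ε) * ∑ i, ∑ j, c i j * f i j := by
    have e1 : ∑ i, α i * a i = ∑ i, α i * ∑ j, f i j := by
      apply Finset.sum_congr rfl; intro i _
      rcases lt_or_eq_of_le (hα i) with h | h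
      · rw [hcs2 i h]
      · rw [← h]; ring
    have e2 : ∑ j, β j * b j = ∑ j, β j * ∑ i, p i j * f i j := by
      apply Finset.sum_congr rfl; intro j _
      rcases lt_or_eq_of_le (hβ j) with h | h
      · rw [hcs3 j h]
      · rw [← h]; ring
    have e3 : ∑ i, ∑ j, γ i j * u i j = ∑ i, ∑ j, γ i j * f i j := by
      apply Finset.sum_congr rfl; intro i _
      apply Finset.sum_congr rfl; intro j _
      rcases lt_or_eq_of_le (hγ i j) with h | h
      · rw [hcs4 i j h]
      · rw [← h]; ring
    have e4 : D = ∑ i, ∑ j, (α i + p i j * β j + γ i j) * f i j := by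
      rw [hD, e1, e2, e3, expand f]
    rw [e4, Finset.mul_sum]
    apply Finset.sum_le_sum; intro i _
    rw [Finset.mul_sum]
    apply Finset.sum_le_sum; intro j _
    rcases lt_or_eq_of_le (hf i j) with h | h
    · have := (abs_le.mp (hcs1 i j h)).1
      nlinarith
    · rw [← h]; ring_nf; rfl
  rcases le_or_gt 1 ε with h1 | h1
  · have : (1 - ε) * ∑ i, ∑ j, c i j * g i j ≤ 0 :=
      mul_nonpos_of_nonpos_of_nonneg (by linarith) hcg0
    linarith
  · have key : (1 - ε) * ∑ i, ∑ j, c i j * g i j ≤ (1 - ε) * D :=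
      mul_le_mul_of_nonneg_left weak (by linarith)
    have key2 : (1 - ε) * D ≤ (1 - ε) * ((1 + ε) * ∑ i, ∑ j, c i j * f i j) :=
      mul_le_mul_of_nonneg_left strong (by linarith)
    have hsq : 0 ≤ ε * ε * ∑ i, ∑ j, c i j * f i j :=
      mul_nonneg (mul_nonneg hε hε) hcf0
    nlinarith [key, key2, hsq]
end
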